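/- For all real x in [-1,1] and natural numbers m ≥ 1, n ≥ m, the identity ((1-x^2)^{m+1/2} T_n^{(m+1)}(x))' = -(n^2 - m^2)(1-x^2)^{m-1/2} T_n^{(m)}(x) holds. -/

import Mathlib

open Polynomial Polynomial.Chebyshev

lemma cheb_ode (n : ℤ) :
    (1 - X ^ 2) * derivative (derivative (T ℝ n)) - X * derivative (T ℝ n)
      + (n : ℝ[X]) ^ 2 * T ℝ n = 0 := by
  have h1 := T_derivative_eq_U (R := ℝ) n
  have h2 := add_one_mul_T_eq_poly_in_U (R := ℝ) (n - 1)
  have h3 := congr_arg derivative h1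
  rw [derivative_mul] at h3
  simp only [derivative_intCast, zero_mul, zero_add] at h3
  simp only [sub_add_cancel] at h2
  linear_combination (norm := (push_cast; ring_nf))
    (1 - (X:ℝ[X])^2) * h3 - X * h1 + (n : ℝ[X]) * h2

lemma cheb_ode_iter (n : ℤ) (m : ℕ) :
    (1 - X ^ 2) * derivative^[m+2] (T ℝ n) - (2 * m + 1 : ℝ[X]) * (X * derivative^[m+1] (T ℝ n))
      + ((n : ℝ[X]) ^ 2 - (m : ℝ[X]) ^ 2) * derivative^[m] (T ℝ n) = 0 := by
  induction m with
  | zero =>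
    simpa using cheb_ode n
  | succ m ih =>
    have h := congr_arg derivative ih
    simp only [derivative_add, derivative_sub, derivative_mul, derivative_one, derivative_X_pow,
      derivative_X, derivative_zero, derivative_natCast, derivative_intCast, derivative_pow, derivative_ofNat, map_ofNat, C_eq_natCast, Nat.cast_ofNat,
      Nat.succ_eq_add_one,
      ← Function.iterate_succ_apply' Polynomial.derivative] at h ⊢
    norm_num at h ⊢
    push_cast at h ⊢
    linear_combination (norm := ring_nf) h

theorem stmt_2 (n m : ℕ) (hm : 1 ≤ m) (hn : m ≤ n) (x : ℝ) (hx : x ∈ Set.Icc (-1:ℝ) 1) :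
    HasDerivAt
      (fun y : ℝ => (1 - y ^ 2) ^ ((m : ℝ) + 1/2) * ((derivative^[m+1] (T ℝ n)).eval y))
      (-((n : ℝ) ^ 2 - (m : ℝ) ^ 2) * (1 - x ^ 2) ^ ((m : ℝ) - 1/2)
        * ((derivative^[m] (T ℝ n)).eval x)) x := by
  obtain ⟨hx1, hx2⟩ := hx
  have h0 : (0:ℝ) ≤ 1 - x ^ 2 := by nlinarith
  set p : ℝ := (m : ℝ) + 1/2 with hp
  set q : ℝ := (m : ℝ) - 1/2 with hq
  -- inner function
  have hin : HasDerivAt (fun y : ℝ => 1 - y ^ 2) (-(2*x)) x := by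
    simpa using ((hasDerivAt_pow 2 x).const_sub 1)
  have hrpow : HasDerivAt (fun y : ℝ => (1 - y ^ 2) ^ p)
      (p * (1 - x ^ 2) ^ (p - 1) * (-(2*x))) x := by
    exact (Real.hasDerivAt_rpow_const (p := p)
      (Or.inr (by rw [hp]; have h1 : (1:ℝ) ≤ (m:ℝ) := Nat.one_le_cast.mpr hm; linarith))).comp x hin
  have hpoly : HasDerivAt (fun y : ℝ => (derivative^[m+1] (T ℝ n)).eval y)
      ((derivative^[m+2] (T ℝ n)).eval x) x := by
    have := (derivative^[m+1] (T ℝ n)).hasDerivAt x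
    rwa [← Function.iterate_succ_apply' Polynomial.derivative] at this
  have hprod := hrpow.mul hpoly
  refine hprod.congr_deriv (Eq.symm ?_)
  -- algebra
  have hode := congr_arg (Polynomial.eval x) (cheb_ode_iter (n := (n:ℤ)) m)
  simp only [eval_add, eval_sub, eval_mul, eval_one, eval_pow, eval_X, eval_natCast,
    eval_intCast, eval_zero, eval_ofNat, Int.cast_natCast] at hode
  have hsplit : (1 - x ^ 2) ^ p = (1 - x ^ 2) ^ q * (1 - x ^ 2) := by
    rw [show p = q + 1 by rw [hp, hq]; ring, Real.rpow_add' h0 (ne_of_gt (by rw [hq]; have h1 : (1:ℝ) ≤ (m:ℝ) := Nat.one_le_cast.mpr hm; linarith)),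
      Real.rpow_one]
  have hpq : p - 1 = q := by rw [hp, hq]; ring
  rw [hpq, hsplit]
  push_cast at hode ⊢
  rw [hp]
  linear_combination (-(1 - x^2) ^ q) * hode
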